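/- Let x₁, x₂ ∈ ℝ, let 0 < η₂ ≤ η₁, and let B ∈ ℝ be a constant satisfying (1/2)B²·(η₁/η₂) ≥ 1. Then η₂·ln(e^{x₁/η₂} + e^{x₂/η₂}) − η₂·ln 2 ≤ η₁·ln(e^{x₁/η₁} + e^{x₂/η₁}) − η₁·ln 2 + (1/2)·(η₁²/η₂ − η₁)·B². -/

import Mathlib

noncomputable section

lemma rpow_add_rpow_le_rpow_aux {a b p : ℝ} (ha : 0 ≤ a) (hb : 0 ≤ b) (hp : 1 ≤ p) :
    a ^ p + b ^ p ≤ (a + b) ^ p := by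
  lift a to NNReal using ha
  lift b to NNReal using hb
  exact_mod_cast NNReal.add_rpow_le_rpow_add a b hp

/-- Iterative-smoothing compatibility inequality for the
log-sum-exp smoothing of `max{x₁, x₂}`. -/
theorem logsumexp_smoothing_compatibility
    (x₁ x₂ η₁ η₂ B : ℝ)
    (hη₂ : 0 < η₂) (hle : η₂ ≤ η₁)
    (hB : 1 ≤ (1 / 2) * B ^ 2 * (η₁ / η₂)) :
    η₂ * Real.log (Real.exp (x₁ / η₂) + Real.exp (x₂ / η₂)) - η₂ * Real.log 2 ≤
      η₁ * Real.log (Real.exp (x₁ / η₁) + Real.exp (x₂ / η₁)) - η₁ * Real.log 2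
        + (1 / 2) * (η₁ ^ 2 / η₂ - η₁) * B ^ 2 := by
  have hη₁ : 0 < η₁ := lt_of_lt_of_le hη₂ hle
  set p := η₁ / η₂ with hp
  have hp1 : 1 ≤ p := (one_le_div hη₂).mpr hle
  have ha : (0:ℝ) ≤ Real.exp (x₁ / η₁) := (Real.exp_pos _).le
  have hb : (0:ℝ) ≤ Real.exp (x₂ / η₁) := (Real.exp_pos _).le
  have hpow : Real.exp (x₁ / η₂) + Real.exp (x₂ / η₂) ≤
      (Real.exp (x₁ / η₁) + Real.exp (x₂ / η₁)) ^ p := by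
    have h1 : Real.exp (x₁ / η₁) ^ p = Real.exp (x₁ / η₂) := by
      rw [← Real.exp_mul, hp]
      congr 1
      field_simp
    have h2 : Real.exp (x₂ / η₁) ^ p = Real.exp (x₂ / η₂) := by
      rw [← Real.exp_mul, hp]
      congr 1
      field_simp
    calc Real.exp (x₁ / η₂) + Real.exp (x₂ / η₂)
        = Real.exp (x₁ / η₁) ^ p + Real.exp (x₂ / η₁) ^ p := by rw [h1, h2]
      _ ≤ (Real.exp (x₁ / η₁) + Real.exp (x₂ / η₁)) ^ p :=
          rpow_add_rpow_le_rpow_aux ha hb hp1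
  have hS₁pos : 0 < Real.exp (x₁ / η₁) + Real.exp (x₂ / η₁) := by positivity
  have hS₂pos : 0 < Real.exp (x₁ / η₂) + Real.exp (x₂ / η₂) := by positivity
  have hlog : Real.log (Real.exp (x₁ / η₂) + Real.exp (x₂ / η₂)) ≤
      p * Real.log (Real.exp (x₁ / η₁) + Real.exp (x₂ / η₁)) := by
    have := Real.log_le_log hS₂pos hpow
    rwa [Real.log_rpow hS₁pos] at this
  have hmain : η₂ * Real.log (Real.exp (x₁ / η₂) + Real.exp (x₂ / η₂)) ≤
      η₁ * Real.log (Real.exp (x₁ / η₁) + Real.exp (x₂ / η₁)) := by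
    have := mul_le_mul_of_nonneg_left hlog hη₂.le
    calc η₂ * Real.log (Real.exp (x₁ / η₂) + Real.exp (x₂ / η₂))
        ≤ η₂ * (p * Real.log (Real.exp (x₁ / η₁) + Real.exp (x₂ / η₁))) := this
      _ = η₁ * Real.log (Real.exp (x₁ / η₁) + Real.exp (x₂ / η₁)) := by
          rw [hp]; field_simp
  have hlog2 : Real.log 2 ≤ 1 := by
    have := Real.log_le_sub_one_of_pos (by norm_num : (0:ℝ) < 2)
    linarith
  have hlog2nn : 0 ≤ Real.log 2 := Real.log_nonneg (by norm_num)
  have hC : (η₁ - η₂) * Real.log 2 ≤ (1 / 2) * (η₁ ^ 2 / η₂ - η₁) * B ^ 2 := by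
    have h1 : (η₁ - η₂) * Real.log 2 ≤ η₁ - η₂ := by
      nlinarith [sub_nonneg.mpr hle]
    have h2 : η₁ - η₂ ≤ (1 / 2) * (η₁ ^ 2 / η₂ - η₂ * (η₁ / η₂)) * B ^ 2 := by
      have key : (η₁ - η₂) * 1 ≤ (η₁ - η₂) * ((1 / 2) * B ^ 2 * (η₁ / η₂)) :=
        mul_le_mul_of_nonneg_left hB (sub_nonneg.mpr hle)
      have : η₁ ^ 2 / η₂ = η₁ * (η₁ / η₂) := by field_simp
      rw [this]
      nlinarith [key]
    have h3 : η₂ * (η₁ / η₂) = η₁ := by field_simp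
    rw [h3] at h2
    linarith
  linarith
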